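/- Let G be a tree on vertex set V rooted at r with |V| ≥ 3, and let OPT be a set of links such that (V, E(G) ∪ OPT) is 2-vertex-connected. Fix a vertex a ∈ V and let E*(a) = {{u,v} ∈ OPT : LCA(u,v) = a}. Consider the auxiliary graph whose nodes are the bad children of a, each representing its subtree G_v, together with (if a has at least one good child) one extra node representing the union of the subtrees of all good children of a, where two nodes are joined by an edge whenever E*(a) contains a link with one endpoint in the vertex set represented by one node and its other endpoint in the vertex set represented by the other node. Then this auxiliary graph is connected; in particular, E*(a) contains a spanning tree of it. -/

import Mathlib

open SimpleGraph

/-- A graph (on at least 3 vertices) is 2-vertex-connected if it is connected and the deletion of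
any single vertex leaves it connected. -/
def TwoVertexConnected {V : Type*} (H : SimpleGraph V) : Prop :=
  H.Connected ∧ ∀ a : V, (H.induce ({a}ᶜ : Set V)).Connected

/-- In a tree `G` rooted at `r`, the vertex `a` lies on the (unique) path from `r` to `v`;
equivalently, `v` belongs to the subtree `G_a` rooted at `a`. -/
def OnRootPath {V : Type*} (G : SimpleGraph V) (r a v : V) : Prop :=
  ∀ p : G.Walk r v, p.IsPath → a ∈ p.support

/-- The vertex set `G_a` of the subtree rooted at `a` (in the tree `G` rooted at `r`). -/
def subtreeSet {V : Type*} (G : SimpleGraph V) (r a : V) : Set V :=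
  {v | OnRootPath G r a v}

/-- `v` is a child of `a` in the tree `G` rooted at `r`. -/
def IsChild {V : Type*} (G : SimpleGraph V) (r a v : V) : Prop :=
  G.Adj a v ∧ OnRootPath G r a v

/-- `a` is the lowest common ancestor of `u` and `v` in the tree `G` rooted at `r`: it lies on
both root paths, and every vertex lying on both root paths is an ancestor of `a`. -/
def IsLCA {V : Type*} (G : SimpleGraph V) (r a u v : V) : Prop :=
  OnRootPath G r a u ∧ OnRootPath G r a v ∧
    ∀ b : V, OnRootPath G r b u → OnRootPath G r b v → OnRootPath G r b a

/-- A child `v` of `a` is good (w.r.t. the link set `L`): `L` contains a link with one endpoint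
in `G_v` and the other endpoint in `V ∖ G_a`. -/
def IsGoodChild {V : Type*} (G : SimpleGraph V) (r : V) (L : Set (Sym2 V)) (a v : V) : Prop :=
  IsChild G r a v ∧ ∃ x ∈ subtreeSet G r v, ∃ y ∈ (subtreeSet G r a)ᶜ, s(x, y) ∈ L

/-- The node set of the auxiliary graph at `a`: one node (a vertex set) for the subtree of each
bad child of `a`, plus — if `a` has at least one good child — one extra node which is the union
of the subtrees of all good children of `a`. -/
def auxParts {V : Type*} (G : SimpleGraph V) (r : V) (L : Set (Sym2 V)) (a : V) :
    Set (Set V) :=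
  {S | ∃ v : V, IsChild G r a v ∧ ¬ IsGoodChild G r L a v ∧ S = subtreeSet G r v} ∪
    {S | (∃ v : V, IsGoodChild G r L a v) ∧
      S = ⋃ v ∈ {v : V | IsGoodChild G r L a v}, subtreeSet G r v}

/-- Two nodes of the auxiliary graph are adjacent (w.r.t. a link set `L`) when they are distinct
members of `P` and `L` contains a link with one endpoint in each of the two vertex sets. -/
def auxAdj {V : Type*} (L : Set (Sym2 V)) (P : Set (Set V)) (A B : Set V) : Prop :=
  A ∈ P ∧ B ∈ P ∧ A ≠ B ∧ ∃ x ∈ A, ∃ y ∈ B, s(x, y) ∈ L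

/-- The auxiliary graph with node set `P` and `L`-adjacency is connected. -/
def auxConnected {V : Type*} (L : Set (Sym2 V)) (P : Set (Set V)) : Prop :=
  ∀ A ∈ P, ∀ B ∈ P, Relation.ReflTransGen (auxAdj L P) A B

/-- The links of `OPT` whose endpoints have lowest common ancestor `a`. -/
def lcaLinks {V : Type*} (G : SimpleGraph V) (r : V) (OPT : Set (Sym2 V)) (a : V) :
    Set (Sym2 V) :=
  {e ∈ OPT | ∃ u v : V, e = s(u, v) ∧ IsLCA G r a u v}


set_option linter.unusedSectionVars false

namespace Stmt10Aux
variable {V : Type*} [DecidableEq V] {G : SimpleGraph V}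

noncomputable def tp (hG : G.IsTree) (u v : V) : G.Walk u v :=
  (hG.existsUnique_path u v).exists.choose

lemma tp_isPath (hG : G.IsTree) (u v : V) : (tp hG u v).IsPath :=
  (hG.existsUnique_path u v).exists.choose_spec

lemma tp_unique (hG : G.IsTree) {u v : V} (p : G.Walk u v) (hp : p.IsPath) :
    p = tp hG u v :=
  (hG.existsUnique_path u v).unique hp (tp_isPath hG u v)

lemma single_isPath (hG : G.IsTree) {a v : V} (h : G.Adj a v) :
    (Walk.cons h Walk.nil : G.Walk a v).IsPath := by
  simp [Walk.cons_isPath_iff, h.ne]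


lemma onRootPath_iff (hG : G.IsTree) (r a v : V) :
    OnRootPath G r a v ↔ a ∈ (tp hG r v).support := by
  constructor
  · exact fun h => h _ (tp_isPath hG r v)
  · intro h p hp; rw [tp_unique hG p hp]; exact h

lemma trans_mem (hG : G.IsTree) {r b c x : V}
    (h1 : b ∈ (tp hG r c).support) (h2 : c ∈ (tp hG r x).support) :
    b ∈ (tp hG r x).support := by
  have hq : ((tp hG r x).takeUntil c h2).IsPath := (tp_isPath hG r x).takeUntil h2
  have := tp_unique hG _ hq
  rw [← this] at h1
  exact (tp hG r x).support_takeUntil_subset h2 h1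

lemma child_decomp (hG : G.IsTree) {r a v : V} (h1 : G.Adj a v)
    (h2 : a ∈ (tp hG r v).support) :
    (tp hG r v).support = (tp hG r a).support ++ [v] := by
  have hd : (tp hG r v).dropUntil a h2 = Walk.cons h1 Walk.nil :=
    (hG.existsUnique_path a v).unique ((tp_isPath hG r v).dropUntil h2)
      (single_isPath hG h1)
  have ht : (tp hG r v).takeUntil a h2 = tp hG r a :=
    tp_unique hG _ ((tp_isPath hG r v).takeUntil h2)
  conv_lhs => rw [← (tp hG r v).take_spec h2]
  rw [Walk.support_append, hd, ht]
  simp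

lemma not_self (hG : G.IsTree) {r a v : V} (h1 : G.Adj a v)
    (h2 : a ∈ (tp hG r v).support) (h3 : v ∈ (tp hG r a).support) : False := by
  have hnd := (tp_isPath hG r v).support_nodup
  rw [child_decomp hG h1 h2] at hnd
  rcases List.nodup_append'.mp hnd with ⟨-, -, hdisj⟩
  exact hdisj h3 (List.mem_singleton_self v)

lemma children_eq (hG : G.IsTree) {r a v w : V} (hv1 : G.Adj a v)
    (hv2 : a ∈ (tp hG r v).support) (hw1 : G.Adj a w) (hw2 : a ∈ (tp hG r w).support)
    (h : v ∈ (tp hG r w).support) : v = w := by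
  rw [child_decomp hG hw1 hw2] at h
  rcases List.mem_append.mp h with h | h
  · exact absurd h (fun h => not_self hG hv1 hv2 h)
  · exact List.mem_singleton.mp h

lemma adj_subset (hG : G.IsTree) {r x y c : V} (hxy : G.Adj x y)
    (ha : c ∈ (tp hG r x).support) : c ∈ (tp hG r y).support ∨ c = x := by
  by_cases hy : y ∈ (tp hG r x).support
  · have hd : (tp hG r x).dropUntil y hy = Walk.cons hxy.symm Walk.nil :=
      (hG.existsUnique_path y x).unique ((tp_isPath hG r x).dropUntil hy)
        (single_isPath hG hxy.symm)
    have ht : (tp hG r x).takeUntil y hy = tp hG r y :=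
      tp_unique hG _ ((tp_isPath hG r x).takeUntil hy)
    have heq : (tp hG r x).support = (tp hG r y).support ++ [x] := by
      conv_lhs => rw [← (tp hG r x).take_spec hy]
      rw [Walk.support_append, hd, ht]
      simp
    rw [heq] at ha
    rcases List.mem_append.mp ha with h | h
    · exact Or.inl h
    · exact Or.inr (List.mem_singleton.mp h)
  · left
    have hW : ((tp hG r x).concat hxy).IsPath := by
      apply Walk.IsPath.mk'
      rw [Walk.support_concat]
      refine List.nodup_append'.mpr ⟨(tp_isPath hG r x).support_nodup, List.nodup_singleton y, ?_⟩
      intro b hb hb'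
      rw [List.mem_singleton.mp hb'] at hb
      exact hy hb
    rw [← tp_unique hG _ hW, Walk.support_concat]
    exact List.mem_append.mpr (Or.inl ha)

lemma child_exists (hG : G.IsTree) {r a x : V} (ha : a ∈ (tp hG r x).support)
    (hax : x ≠ a) :
    ∃ c, G.Adj a c ∧ a ∈ (tp hG r c).support ∧ c ∈ (tp hG r x).support := by
  have hqp : ((tp hG r x).dropUntil a ha).IsPath := (tp_isPath hG r x).dropUntil ha
  have hnn : ¬((tp hG r x).dropUntil a ha).Nil := Walk.not_nil_of_ne (fun h => hax h.symm)
  obtain ⟨c, hadj, q', hq'⟩ := Walk.not_nil_iff.mp hnn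
  have hsup : (tp hG r x).support
      = ((tp hG r x).takeUntil a ha).support ++ ((tp hG r x).dropUntil a ha).support.tail := by
    conv_lhs => rw [← (tp hG r x).take_spec ha]
    rw [Walk.support_append]
  have hct : c ∈ ((tp hG r x).dropUntil a ha).support.tail := by
    rw [hq']; simp
  have hcq : c ∈ ((tp hG r x).dropUntil a ha).support := List.mem_of_mem_tail hct
  refine ⟨c, hadj, ?_, (tp hG r x).support_dropUntil_subset ha hcq⟩
  have hnodup := (tp_isPath hG r x).support_nodup
  rw [hsup] at hnodup
  have hcn : c ∉ ((tp hG r x).takeUntil a ha).support := by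
    intro hc
    exact (List.nodup_append'.mp hnodup).2.2 hc hct
  have hW : (((tp hG r x).takeUntil a ha).concat hadj).IsPath := by
    apply Walk.IsPath.mk'
    rw [Walk.support_concat]
    exact List.nodup_append'.mpr
      ⟨((tp_isPath hG r x).takeUntil ha).support_nodup, List.nodup_singleton c,
        fun b hb hb' => hcn (by rwa [List.mem_singleton.mp hb'] at hb)⟩
  rw [← tp_unique hG _ hW, Walk.support_concat]
  exact List.mem_append.mpr (Or.inl (Walk.end_mem_support _))

lemma key_mem (hG : G.IsTree) {r a v x b : V} (hv1 : G.Adj a v)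
    (hv2 : a ∈ (tp hG r v).support) (hx : v ∈ (tp hG r x).support)
    (hb : b ∈ (tp hG r x).support) :
    b ∈ (tp hG r a).support ∨ v ∈ (tp hG r b).support := by
  have ha : a ∈ (tp hG r x).support := trans_mem hG hv2 hx
  have hts : (tp hG r x).takeUntil a ha = tp hG r a :=
    tp_unique hG _ ((tp_isPath hG r x).takeUntil ha)
  have hsup : (tp hG r x).support
      = ((tp hG r x).takeUntil a ha).support ++ ((tp hG r x).dropUntil a ha).support.tail := by
    conv_lhs => rw [← (tp hG r x).take_spec ha]
    rw [Walk.support_append]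
  have hvt : v ∉ ((tp hG r x).takeUntil a ha).support := by
    intro h
    exact not_self hG hv1 hv2 (hts ▸ h)
  have hvq : v ∈ ((tp hG r x).dropUntil a ha).support := by
    rw [hsup] at hx
    rcases List.mem_append.mp hx with h | h
    · exact absurd h hvt
    · exact List.mem_of_mem_tail h
  have hqt : ((tp hG r x).dropUntil a ha).takeUntil v hvq = Walk.cons hv1 Walk.nil :=
    (hG.existsUnique_path a v).unique
      (((tp_isPath hG r x).dropUntil ha).takeUntil hvq) (single_isPath hG hv1)
  have hq2 : (tp hG r x).dropUntil a ha
      = Walk.cons hv1 (((tp hG r x).dropUntil a ha).dropUntil v hvq) := by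
    conv_lhs => rw [← ((tp hG r x).dropUntil a ha).take_spec hvq]
    rw [hqt, Walk.cons_append, Walk.nil_append]
  rw [hsup] at hb
  rcases List.mem_append.mp hb with hbT | hbQ
  · exact Or.inl (hts ▸ hbT)
  · right
    have hbd : b ∈ (((tp hG r x).dropUntil a ha).dropUntil v hvq).support := by
      rw [hq2] at hbQ
      simpa using hbQ
    have hdecomp : tp hG r x
        = (((tp hG r x).takeUntil a ha).append (Walk.cons hv1
            ((((tp hG r x).dropUntil a ha).dropUntil v hvq).takeUntil b hbd))).append
          ((((tp hG r x).dropUntil a ha).dropUntil v hvq).dropUntil b hbd) := by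
      conv_lhs => rw [← (tp hG r x).take_spec ha]
      conv_lhs => rw [hq2]
      conv_lhs =>
        rw [← ((((tp hG r x)).dropUntil a ha).dropUntil v hvq).take_spec hbd]
      rw [← Walk.cons_append, ← Walk.append_assoc]
    have hWp : (((tp hG r x).takeUntil a ha).append (Walk.cons hv1
        ((((tp hG r x).dropUntil a ha).dropUntil v hvq).takeUntil b hbd))).IsPath := by
      have := tp_isPath hG r x
      rw [hdecomp] at this
      exact this.of_append_left
    rw [← tp_unique hG _ hWp, Walk.mem_support_append_iff]
    right
    rw [Walk.support_cons]
    exact List.mem_cons_of_mem _ (Walk.start_mem_support _)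

end Stmt10Aux

namespace Stmt10Aux
section
variable {V : Type*} [DecidableEq V] {G : SimpleGraph V}

lemma subtree_disjoint (hG : G.IsTree) {r a v w x : V}
    (hv1 : G.Adj a v) (hv2 : a ∈ (tp hG r v).support)
    (hw1 : G.Adj a w) (hw2 : a ∈ (tp hG r w).support) (hvw : v ≠ w)
    (hx1 : v ∈ (tp hG r x).support) (hx2 : w ∈ (tp hG r x).support) : False := by
  rcases key_mem hG hv1 hv2 hx1 hx2 with h | h
  · exact not_self hG hw1 hw2 h
  · exact hvw (children_eq hG hv1 hv2 hw1 hw2 h)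

lemma mem_subtree_iff (hG : G.IsTree) {r v x : V} :
    x ∈ subtreeSet G r v ↔ v ∈ (tp hG r x).support :=
  onRootPath_iff hG r v x

lemma isChild_iff (hG : G.IsTree) {r a v : V} :
    IsChild G r a v ↔ G.Adj a v ∧ a ∈ (tp hG r v).support :=
  and_congr_right fun _ => onRootPath_iff hG r a v

lemma isLCA_of (hG : G.IsTree) {r a v w x y : V}
    (hv : IsChild G r a v) (hw : IsChild G r a w) (hvw : v ≠ w)
    (hx : x ∈ subtreeSet G r v) (hy : y ∈ subtreeSet G r w) :
    IsLCA G r a x y := by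
  obtain ⟨hv1, hv2⟩ := (isChild_iff hG).mp hv
  obtain ⟨hw1, hw2⟩ := (isChild_iff hG).mp hw
  rw [mem_subtree_iff hG] at hx hy
  refine ⟨(onRootPath_iff hG r a x).mpr (trans_mem hG hv2 hx),
    (onRootPath_iff hG r a y).mpr (trans_mem hG hw2 hy), fun b hbx hby => ?_⟩
  rw [onRootPath_iff hG] at hbx hby ⊢
  rcases key_mem hG hv1 hv2 hx hbx with h | h
  · exact h
  · rcases key_mem hG hw1 hw2 hy hby with h' | h'
    · exact h'
    · exact (subtree_disjoint hG hv1 hv2 hw1 hw2 hvw h h').elim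

lemma no_tree_edge_subtrees (hG : G.IsTree) {r a v w x y : V}
    (hv : IsChild G r a v) (hw : IsChild G r a w) (hvw : v ≠ w)
    (hx : x ∈ subtreeSet G r v) (hy : y ∈ subtreeSet G r w)
    (hxy : G.Adj x y) : False := by
  obtain ⟨hv1, hv2⟩ := (isChild_iff hG).mp hv
  obtain ⟨hw1, hw2⟩ := (isChild_iff hG).mp hw
  rw [mem_subtree_iff hG] at hx hy
  rcases adj_subset hG hxy hx with h | h
  · exact subtree_disjoint hG hv1 hv2 hw1 hw2 hvw h hy
  · subst h
    rcases adj_subset hG hxy.symm hy with h' | h'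
    · exact hvw (children_eq hG hw1 hw2 hv1 hv2 h').symm
    · subst h'
      -- v and w are both adjacent to a and to each other: two distinct paths a → w
      have hp2 : (Walk.cons hv1 (Walk.cons hxy Walk.nil) : G.Walk a w).IsPath := by
        simp [Walk.cons_isPath_iff, hv1.ne, hw1.ne, hxy.ne]
      have := (hG.existsUnique_path a w).unique (single_isPath hG hw1) hp2
      have hlen := congrArg Walk.length this
      simp [Walk.length_cons] at hlen

lemma no_tree_edge_out (hG : G.IsTree) {r a v x y : V}
    (hv : IsChild G r a v) (hx : x ∈ subtreeSet G r v)
    (hy : y ∉ subtreeSet G r a) (hxy : G.Adj x y) : False := by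
  obtain ⟨hv1, hv2⟩ := (isChild_iff hG).mp hv
  rw [mem_subtree_iff hG] at hx
  rw [mem_subtree_iff hG] at hy
  have ha : a ∈ (tp hG r x).support := trans_mem hG hv2 hx
  rcases adj_subset hG hxy ha with h | h
  · exact hy h
  · subst h
    exact not_self hG hv1 hv2 hx

end
end Stmt10Aux

namespace Stmt10Aux
section
variable {V : Type*} [DecidableEq V] {G : SimpleGraph V}

/-- The union of the subtrees of the good children. -/
def goodUnion (G : SimpleGraph V) (r : V) (OPT : Set (Sym2 V)) (a : V) : Set V :=
  ⋃ v ∈ {v : V | IsGoodChild G r OPT a v}, subtreeSet G r v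

open Classical in
/-- The region of a vertex: the subtree of the bad child containing it, if any, and
otherwise the union of the good subtrees. -/
noncomputable def region (G : SimpleGraph V) (r : V) (OPT : Set (Sym2 V)) (a x : V) :
    Set V :=
  if h : ∃ v, (IsChild G r a v ∧ ¬ IsGoodChild G r OPT a v) ∧ x ∈ subtreeSet G r v
  then subtreeSet G r h.choose
  else goodUnion G r OPT a

lemma region_bad (hG : G.IsTree) {r : V} {OPT : Set (Sym2 V)} {a v x : V}
    (hv : IsChild G r a v ∧ ¬ IsGoodChild G r OPT a v) (hx : x ∈ subtreeSet G r v) :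
    region G r OPT a x = subtreeSet G r v := by
  have hex : ∃ v, (IsChild G r a v ∧ ¬ IsGoodChild G r OPT a v) ∧ x ∈ subtreeSet G r v :=
    ⟨v, hv, hx⟩
  rw [region, dif_pos hex]
  obtain ⟨⟨hc, _⟩, hm⟩ := hex.choose_spec
  have : hex.choose = v := by
    by_contra hne
    obtain ⟨h1, h2⟩ := (isChild_iff hG).mp hc
    obtain ⟨h3, h4⟩ := (isChild_iff hG).mp hv.1
    exact subtree_disjoint hG h1 h2 h3 h4 hne
      ((mem_subtree_iff hG).mp hm) ((mem_subtree_iff hG).mp hx)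
  rw [this]

lemma region_notbad {r : V} {OPT : Set (Sym2 V)} {a x : V}
    (h : ¬ ∃ v, (IsChild G r a v ∧ ¬ IsGoodChild G r OPT a v) ∧ x ∈ subtreeSet G r v) :
    region G r OPT a x = goodUnion G r OPT a := by
  rw [region, dif_neg h]

lemma self_mem_subtree (hG : G.IsTree) {r v : V} : v ∈ subtreeSet G r v :=
  (mem_subtree_iff hG).mpr (Walk.end_mem_support _)

/-- A good child's subtree is not equal to a bad child's subtree, etc.:
if `v` is a child and `v ∈ subtreeSet G r w` for a child `w`, then `v = w`. -/
lemma child_mem_subtree_eq (hG : G.IsTree) {r a v w : V}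
    (hv : IsChild G r a v) (hw : IsChild G r a w) (h : v ∈ subtreeSet G r w) : v = w := by
  obtain ⟨h1, h2⟩ := (isChild_iff hG).mp hw
  obtain ⟨h3, h4⟩ := (isChild_iff hG).mp hv
  exact (children_eq hG h1 h2 h3 h4 ((mem_subtree_iff hG).mp h)).symm

end
end Stmt10Aux

namespace Stmt10Aux
section
variable {V : Type*} [DecidableEq V] {G : SimpleGraph V}

lemma auxAdj_symm {L : Set (Sym2 V)} {P : Set (Set V)} {A B : Set V}
    (h : auxAdj L P A B) : auxAdj L P B A := by
  obtain ⟨hA, hB, hne, x, hx, y, hy, hl⟩ := h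
  exact ⟨hB, hA, hne.symm, y, hy, x, hx, by rwa [Sym2.eq_swap]⟩

lemma link_mem (hG : G.IsTree) {r : V} {OPT : Set (Sym2 V)} {a v w u w' : V}
    (hv : IsChild G r a v) (hw : IsChild G r a w) (hvw : v ≠ w)
    (hu : u ∈ subtreeSet G r v) (hw' : w' ∈ subtreeSet G r w)
    (hadj : (SimpleGraph.fromEdgeSet (G.edgeSet ∪ OPT)).Adj u w') :
    s(u, w') ∈ lcaLinks G r OPT a := by
  obtain ⟨hmem, hne⟩ := (SimpleGraph.fromEdgeSet_adj _).mp hadj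
  rcases hmem with hE | hO
  · exact (no_tree_edge_subtrees hG hv hw hvw hu hw' (G.mem_edgeSet.mp hE)).elim
  · exact ⟨hO, u, w', rfl, isLCA_of hG hv hw hvw hu hw'⟩

lemma stepBad (hG : G.IsTree) {r : V} {OPT : Set (Sym2 V)} {a v u w : V}
    (hv : IsChild G r a v ∧ ¬ IsGoodChild G r OPT a v)
    (hu : u ∈ subtreeSet G r v) (hwa : w ≠ a)
    (hadj : (SimpleGraph.fromEdgeSet (G.edgeSet ∪ OPT)).Adj u w) :
    region G r OPT a w = subtreeSet G r v ∨
      auxAdj (lcaLinks G r OPT a) (auxParts G r OPT a)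
        (subtreeSet G r v) (region G r OPT a w) := by
  by_cases hwb : ∃ v', (IsChild G r a v' ∧ ¬ IsGoodChild G r OPT a v') ∧
      w ∈ subtreeSet G r v'
  · obtain ⟨v', hv', hw'⟩ := hwb
    rw [region_bad hG hv' hw']
    by_cases hvv : v' = v
    · left; rw [hvv]
    · right
      refine ⟨Or.inl ⟨v, hv.1, hv.2, rfl⟩, Or.inl ⟨v', hv'.1, hv'.2, rfl⟩, ?_, u, hu, w, hw', ?_⟩
      · intro he
        have hm : v' ∈ subtreeSet G r v := by
          rw [he]; exact self_mem_subtree hG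
        exact hvv (child_mem_subtree_eq hG hv'.1 hv.1 hm)
      · exact link_mem hG hv.1 hv'.1 (fun h => hvv h.symm) hu hw' hadj
  · rw [region_notbad hwb]
    by_cases hwg : ∃ g, IsGoodChild G r OPT a g ∧ w ∈ subtreeSet G r g
    · obtain ⟨g, hg, hwgm⟩ := hwg
      right
      refine ⟨Or.inl ⟨v, hv.1, hv.2, rfl⟩, Or.inr ⟨⟨g, hg⟩, rfl⟩, ?_, u, hu, w, ?_, ?_⟩
      · intro he
        have hm : v ∈ goodUnion G r OPT a := by
          rw [← he]; exact self_mem_subtree hG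
        obtain ⟨g', hg', hm'⟩ := Set.mem_iUnion₂.mp hm
        exact hv.2 ((child_mem_subtree_eq hG hv.1 hg'.1 hm') ▸ hg')
      · exact Set.mem_iUnion₂.mpr ⟨g, hg, hwgm⟩
      · exact link_mem hG hv.1 hg.1 (fun h => hv.2 (h ▸ hg)) hu hwgm hadj
    · exfalso
      have hwsa : w ∉ subtreeSet G r a := by
        intro hws
        obtain ⟨c, hc1, hc2, hc3⟩ := child_exists hG ((mem_subtree_iff hG).mp hws) hwa
        have hcc : IsChild G r a c := (isChild_iff hG).mpr ⟨hc1, hc2⟩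
        have hwc : w ∈ subtreeSet G r c := (mem_subtree_iff hG).mpr hc3
        by_cases hcg : IsGoodChild G r OPT a c
        · exact hwg ⟨c, hcg, hwc⟩
        · exact hwb ⟨c, ⟨hcc, hcg⟩, hwc⟩
      obtain ⟨hmem, hne⟩ := (SimpleGraph.fromEdgeSet_adj _).mp hadj
      rcases hmem with hE | hO
      · exact no_tree_edge_out hG hv.1 hu hwsa (G.mem_edgeSet.mp hE)
      · exact hv.2 ⟨hv.1, u, hu, w, hwsa, hO⟩

lemma step (hG : G.IsTree) {r : V} {OPT : Set (Sym2 V)} {a u w : V}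
    (hua : u ≠ a) (hwa : w ≠ a)
    (hadj : (SimpleGraph.fromEdgeSet (G.edgeSet ∪ OPT)).Adj u w) :
    Relation.ReflTransGen (auxAdj (lcaLinks G r OPT a) (auxParts G r OPT a))
      (region G r OPT a u) (region G r OPT a w) := by
  by_cases hub : ∃ v, (IsChild G r a v ∧ ¬ IsGoodChild G r OPT a v) ∧
      u ∈ subtreeSet G r v
  · obtain ⟨v, hv, hu⟩ := hub
    rw [region_bad hG hv hu]
    rcases stepBad hG hv hu hwa hadj with h | h
    · rw [h]
    · exact Relation.ReflTransGen.single h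
  · by_cases hwb : ∃ v, (IsChild G r a v ∧ ¬ IsGoodChild G r OPT a v) ∧
        w ∈ subtreeSet G r v
    · obtain ⟨v, hv, hw⟩ := hwb
      rw [region_bad hG hv hw, region_notbad hub]
      rcases stepBad hG hv hw hua hadj.symm with h | h
      · rw [region_notbad hub] at h
        rw [← h]
      · rw [region_notbad hub] at h
        exact Relation.ReflTransGen.single (auxAdj_symm h)
    · rw [region_notbad hub, region_notbad hwb]

lemma exists_repr (hG : G.IsTree) {r : V} {OPT : Set (Sym2 V)} {a : V} {A : Set V}
    (hA : A ∈ auxParts G r OPT a) : ∃ x, x ≠ a ∧ region G r OPT a x = A := by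
  rcases hA with ⟨v, hc, hb, rfl⟩ | ⟨⟨g, hg⟩, rfl⟩
  · exact ⟨v, hc.1.ne', region_bad hG ⟨hc, hb⟩ (self_mem_subtree hG)⟩
  · refine ⟨g, hg.1.1.ne', ?_⟩
    have hng : ¬ ∃ v, (IsChild G r a v ∧ ¬ IsGoodChild G r OPT a v) ∧
        g ∈ subtreeSet G r v := by
      rintro ⟨v, ⟨hvc, hvb⟩, hmem⟩
      exact hvb ((child_mem_subtree_eq hG hg.1 hvc hmem) ▸ hg)
    rw [region_notbad hng]
    rfl

lemma walk_rec (hG : G.IsTree) {r : V} {OPT : Set (Sym2 V)} {a : V}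
    {c d : ({a}ᶜ : Set V)}
    (p : ((SimpleGraph.fromEdgeSet (G.edgeSet ∪ OPT)).induce ({a}ᶜ : Set V)).Walk c d) :
    Relation.ReflTransGen (auxAdj (lcaLinks G r OPT a) (auxParts G r OPT a))
      (region G r OPT a c.1) (region G r OPT a d.1) := by
  induction p with
  | nil => exact Relation.ReflTransGen.refl
  | @cons c m d h q ih =>
      have hc : (c : V) ≠ a := fun hh => c.2 (Set.mem_singleton_iff.mpr hh)
      have hm : (m : V) ≠ a := fun hh => m.2 (Set.mem_singleton_iff.mpr hh)
      exact Relation.ReflTransGen.trans (step hG hc hm h) ih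

end
end Stmt10Aux


/-- If `OPT` augments the tree `G` to a 2-vertex-connected graph then, for every vertex `a`,
the auxiliary graph at `a` (bad-child subtrees plus the union of good-child subtrees) is
connected using only the links of `E*(a) = {{u,v} ∈ OPT : LCA(u,v) = a}`; in particular
`E*(a)` contains a spanning tree of it. -/
theorem stmt10 {V : Type*} [Fintype V] (G : SimpleGraph V) (r : V) (hG : G.IsTree)
    (h3 : 3 ≤ Fintype.card V)
    (OPT : Set (Sym2 V))
    (hOPT : TwoVertexConnected (SimpleGraph.fromEdgeSet (G.edgeSet ∪ OPT)))
    (a : V) :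
    auxConnected (lcaLinks G r OPT a) (auxParts G r OPT a) := by
  classical
  intro A hA B hB
  obtain ⟨x, hxa, hxr⟩ := Stmt10Aux.exists_repr hG hA
  obtain ⟨y, hya, hyr⟩ := Stmt10Aux.exists_repr hG hB
  have hx' : x ∈ ({a}ᶜ : Set V) := by simpa using hxa
  have hy' : y ∈ ({a}ᶜ : Set V) := by simpa using hya
  obtain ⟨p⟩ := (hOPT.2 a).preconnected ⟨x, hx'⟩ ⟨y, hy'⟩
  have h := Stmt10Aux.walk_rec hG (r := r) p
  rwa [hxr, hyr] at h
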